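/- Let a₁, …, a_d ∈ ℕ^k be nonzero vectors and define T : ℤ^d → ℤ^k by T(μ₁, …, μ_d) = μ₁a₁ + ⋯ + μ_d a_d. Order ℤ^d lexicographically by its coordinates, and call z ∈ ℤ^d lex-positive if z is lexicographically greater than 0. Suppose (x₁, y₁), …, (x_r, y_r) ∈ ℕ^d × ℕ^d generate the additive monoid {(x, y) ∈ ℕ^d × ℕ^d : T(x) = T(y)}, and for each index i with x_i ≠ y_i let z_i be whichever of x_i − y_i and y_i − x_i is lex-positive. Then for every z ∈ ℕ^d, z is the lexicographically least element of the fiber {y ∈ ℕ^d : T(y) = T(z)} if and only if there is no index i with x_i ≠ y_i such that z − z_i ∈ ℕ^d (i.e., z − z_i has all coordinates non-negative). -/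

import Mathlib

/-- `v ∈ ℤ^d` is lexicographically positive: at the first coordinate where
`v` differs from `0`, it is positive. -/
def LexPos {d : ℕ} (v : Fin d → ℤ) : Prop :=
  ∃ j : Fin d, (∀ j' : Fin d, j' < j → v j' = 0) ∧ 0 < v j

/-- Auxiliary: `v` is lexicographically non-positive. -/
def LexNonpos16 {d : ℕ} (v : Fin d → ℤ) : Prop :=
  ∀ j : Fin d, (∀ j' : Fin d, j' < j → v j' = 0) → v j ≤ 0

lemma lexNonpos_iff_aux16 {d : ℕ} (v : Fin d → ℤ) :
    LexNonpos16 v ↔ ¬ LexPos v := by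
  constructor
  · rintro h ⟨j, h0, hj⟩
    exact absurd (h j h0) (not_le.mpr hj)
  · intro h j h0
    by_contra hc
    exact h ⟨j, h0, by omega⟩

lemma lexNonpos_zero_aux16 {d : ℕ} : LexNonpos16 (0 : Fin d → ℤ) :=
  fun _ _ => le_rfl

lemma lexNonpos_add_aux16 {d : ℕ} {u v : Fin d → ℤ}
    (hu : LexNonpos16 u) (hv : LexNonpos16 v) : LexNonpos16 (u + v) := by
  have key : ∀ n : ℕ, ∀ j : Fin d, (j : ℕ) = n →
      (∀ j' : Fin d, j' < j → (u + v) j' = 0) →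
      ∀ j' : Fin d, j' < j → u j' = 0 ∧ v j' = 0 := by
    intro n
    induction n using Nat.strong_induction_on with
    | _ n ih =>
      intro j hj hpre j' hj'
      have hj'n : (j' : ℕ) < n := by rw [← hj]; exact hj'
      have hprev : ∀ j'' : Fin d, j'' < j' → u j'' = 0 ∧ v j'' = 0 :=
        ih (j' : ℕ) hj'n j' rfl (fun j'' h => hpre j'' (h.trans hj'))
      have hu' := hu j' (fun j'' h => (hprev j'' h).1)
      have hv' := hv j' (fun j'' h => (hprev j'' h).2)
      have hsum := hpre j' hj'
      simp only [Pi.add_apply] at hsum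
      omega
  intro j hpre
  have h2 := key (j : ℕ) j rfl hpre
  have hu' := hu j (fun j' h => (h2 j' h).1)
  have hv' := hv j (fun j' h => (h2 j' h).2)
  simp only [Pi.add_apply]
  omega

lemma lexNonpos_nsmul_aux16 {d : ℕ} {v : Fin d → ℤ} (hv : LexNonpos16 v) (c : ℕ) :
    LexNonpos16 (c • v) := by
  intro j hpre
  simp only [Pi.smul_apply, nsmul_eq_mul]
  rcases Nat.eq_zero_or_pos c with hc | hc
  · simp [hc]
  · have hcz : (0 : ℤ) < (c : ℤ) := by exact_mod_cast hc
    have hv0 : ∀ j' : Fin d, j' < j → v j' = 0 := by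
      intro j' hj'
      have := hpre j' hj'
      simp only [Pi.smul_apply, nsmul_eq_mul] at this
      exact (mul_eq_zero.mp this).resolve_left (by omega)
    have := hv j hv0
    exact mul_nonpos_of_nonneg_of_nonpos hcz.le this

lemma lexPos_not_neg_aux16 {d : ℕ} {v : Fin d → ℤ} (h : LexPos v) :
    ¬ LexPos (-v) := by
  obtain ⟨j, h0, hj⟩ := h
  rintro ⟨j2, h20, hj2⟩
  simp only [Pi.neg_apply] at h20 hj2
  rcases lt_trichotomy j j2 with hlt | rfl | hlt
  · have := h20 j hlt; omega
  · omega
  · have := h0 j2 hlt; omega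

lemma lexPos_trichotomy_aux16 {d : ℕ} {v : Fin d → ℤ} (h : v ≠ 0) :
    LexPos v ∨ LexPos (-v) := by
  have hex : ∃ j : Fin d, v j ≠ 0 := by
    by_contra hc
    push_neg at hc
    exact h (funext fun j => hc j)
  set s : Finset (Fin d) := Finset.univ.filter (fun j => v j ≠ 0) with hs
  have hsne : s.Nonempty := by
    obtain ⟨j, hj⟩ := hex
    exact ⟨j, by simp [hs, hj]⟩
  set j := s.min' hsne with hjdef
  have hjs : j ∈ s := s.min'_mem hsne
  have hjne : v j ≠ 0 := by simpa [hs] using hjs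
  have hpre : ∀ j' : Fin d, j' < j → v j' = 0 := by
    intro j' hj'
    by_contra hc
    have : j ≤ j' := s.min'_le j' (by simp [hs, hc])
    exact absurd hj' (not_lt.mpr this)
  rcases lt_or_gt_of_ne hjne with hneg | hpos
  · right
    exact ⟨j, fun j' h' => by simp [hpre j' h'], by simp; omega⟩
  · left
    exact ⟨j, hpre, hpos⟩

theorem stmt_16 (k d : ℕ) (a : Fin d → Fin k → ℕ) (ha : ∀ i, a i ≠ 0)
    (T : (Fin d → ℤ) → (Fin k → ℤ))
    (hT : ∀ μ : Fin d → ℤ, T μ = fun j => ∑ i, μ i * (a i j : ℤ))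
    (r : ℕ) (xg yg : Fin r → (Fin d → ℕ))
    (hgen : ∀ p : (Fin d → ℕ) × (Fin d → ℕ),
      p ∈ AddSubmonoid.closure (Set.range fun i => (xg i, yg i)) ↔
        T (fun j => (p.1 j : ℤ)) = T (fun j => (p.2 j : ℤ)))
    (z : Fin r → Fin d → ℤ)
    (hz : ∀ i : Fin r, xg i ≠ yg i →
      ((z i = fun j => (xg i j : ℤ) - (yg i j : ℤ)) ∨
        (z i = fun j => (yg i j : ℤ) - (xg i j : ℤ))) ∧ LexPos (z i)) :
    ∀ w : Fin d → ℕ,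
      (∀ y : Fin d → ℕ, T (fun j => (y j : ℤ)) = T (fun j => (w j : ℤ)) →
          y = w ∨ LexPos (fun j => (y j : ℤ) - (w j : ℤ)))
        ↔ ¬∃ i : Fin r, xg i ≠ yg i ∧ ∀ j, 0 ≤ (w j : ℤ) - z i j := by
  intro w
  constructor
  · -- minimality → no reduction possible
    rintro hmin ⟨i, hne, hnn⟩
    obtain ⟨hzi, hpos⟩ := hz i hne
    have hTg : T (fun j => (xg i j : ℤ)) = T (fun j => (yg i j : ℤ)) :=
      (hgen (xg i, yg i)).1 (AddSubmonoid.subset_closure ⟨i, rfl⟩)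
    have hTz : ∀ m, ∑ j, z i j * (a j m : ℤ) = 0 := by
      intro m
      have hgm : ∑ j, (xg i j : ℤ) * (a j m : ℤ) = ∑ j, (yg i j : ℤ) * (a j m : ℤ) := by
        have := congrFun hTg m
        simpa [hT] using this
      rcases hzi with h | h <;>
        simp [h, sub_mul, Finset.sum_sub_distrib, hgm]
    set y : Fin d → ℕ := fun j => ((w j : ℤ) - z i j).toNat with hy_def
    have hy : ∀ j, (y j : ℤ) = (w j : ℤ) - z i j := fun j => Int.toNat_of_nonneg (hnn j)
    have hTy : T (fun j => (y j : ℤ)) = T (fun j => (w j : ℤ)) := by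
      rw [hT, hT]
      funext m
      simp only [hy, sub_mul, Finset.sum_sub_distrib, hTz, sub_zero]
    rcases hmin y hTy with h | h
    · obtain ⟨j, _, hj⟩ := hpos
      have h1 := hy j
      rw [h] at h1
      omega
    · have hh : (fun j => (y j : ℤ) - (w j : ℤ)) = -(z i) := by
        funext j
        simp only [Pi.neg_apply]
        rw [hy j]; ring
      rw [hh] at h
      exact lexPos_not_neg_aux16 hpos h
  · -- irreducibility → minimality
    intro hno y hTy
    by_cases heq : y = w
    · exact Or.inl heq
    right
    by_contra hnp
    have hne0 : (fun j => (y j : ℤ) - (w j : ℤ)) ≠ 0 := by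
      intro h0
      apply heq
      funext j
      have := congrFun h0 j
      simp only [Pi.zero_apply, sub_eq_zero] at this
      exact_mod_cast this
    have hwy : LexPos (-(fun j => (y j : ℤ) - (w j : ℤ))) :=
      (lexPos_trichotomy_aux16 hne0).resolve_left hnp
    have hwy' : LexPos (fun j => (w j : ℤ) - (y j : ℤ)) := by
      have hh : (-(fun j => (y j : ℤ) - (w j : ℤ))) = fun j => (w j : ℤ) - (y j : ℤ) := by
        funext j; simp
      rwa [hh] at hwy
    -- representation of (w, y) as a sum of generators
    have hmem : ((w, y) : (Fin d → ℕ) × (Fin d → ℕ)) ∈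
        AddSubmonoid.closure (Set.range fun i => (xg i, yg i)) :=
      (hgen (w, y)).2 hTy.symm
    have hrepall : ∀ p ∈ AddSubmonoid.closure (Set.range fun i => (xg i, yg i)),
        ∃ c : Fin r → ℕ, p = ∑ i, c i • (xg i, yg i) := by
      intro p hp
      induction hp using AddSubmonoid.closure_induction with
      | mem q hq =>
        obtain ⟨i, rfl⟩ := hq
        refine ⟨Pi.single i 1, ?_⟩
        rw [Fintype.sum_eq_single i (fun i' hi' => by
          simp [Pi.single_eq_of_ne hi'])]
        simp
      | zero => exact ⟨0, by simp⟩
      | add p q hp hq ihp ihq =>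
        obtain ⟨c1, h1⟩ := ihp
        obtain ⟨c2, h2⟩ := ihq
        refine ⟨c1 + c2, ?_⟩
        rw [h1, h2, ← Finset.sum_add_distrib]
        exact Finset.sum_congr rfl fun i _ => by rw [Pi.add_apply, add_smul]
    obtain ⟨c, hc⟩ := hrepall (w, y) hmem
    have hw : ∀ j, w j = ∑ i, c i * xg i j := by
      intro j
      have h1 := congrFun (congrArg Prod.fst hc) j
      simpa [Prod.fst_sum, Finset.sum_apply] using h1
    have hyr : ∀ j, y j = ∑ i, c i * yg i j := by
      intro j
      have h1 := congrFun (congrArg Prod.snd hc) j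
      simpa [Prod.snd_sum, Finset.sum_apply] using h1
    -- the integer difference vectors
    set D : Fin r → (Fin d → ℤ) := fun i => fun j => (xg i j : ℤ) - (yg i j : ℤ) with hD
    have hsum : (fun j => (w j : ℤ) - (y j : ℤ)) = ∑ i, c i • D i := by
      funext j
      have hwj : (w j : ℤ) = ∑ i, (c i : ℤ) * (xg i j : ℤ) := by
        rw [hw j]; push_cast; rfl
      have hyj : (y j : ℤ) = ∑ i, (c i : ℤ) * (yg i j : ℤ) := by
        rw [hyr j]; push_cast; rfl
      rw [Finset.sum_apply]
      rw [hwj, hyj, ← Finset.sum_sub_distrib]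
      refine Finset.sum_congr rfl fun i _ => ?_
      simp only [hD, Pi.smul_apply, nsmul_eq_mul]
      ring
    -- there must be a lex-positive generator used
    have hkey : ∃ i, c i ≠ 0 ∧ LexPos (D i) := by
      by_contra hnone
      push_neg at hnone
      have hle : ∀ i : Fin r, LexNonpos16 (c i • D i) := by
        intro i
        by_cases hci : c i = 0
        · rw [hci, zero_smul]
          exact lexNonpos_zero_aux16
        · have hnp' : ¬ LexPos (D i) := hnone i hci
          exact lexNonpos_nsmul_aux16 ((lexNonpos_iff_aux16 _).mpr hnp') (c i)
      have hsl : LexNonpos16 (∑ i, c i • D i) := by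
        refine Finset.sum_induction _ LexNonpos16
          (fun u v hu hv => lexNonpos_add_aux16 hu hv) lexNonpos_zero_aux16
          (fun i _ => hle i)
      rw [← hsum] at hsl
      exact ((lexNonpos_iff_aux16 _).mp hsl) hwy'
    obtain ⟨i, hci, hDi⟩ := hkey
    -- this generator gives a reduction of w
    have hnei : xg i ≠ yg i := by
      intro h
      obtain ⟨j, _, hj⟩ := hDi
      simp [hD, h] at hj
    obtain ⟨hzi, hposi⟩ := hz i hnei
    have hzD : z i = D i := by
      rcases hzi with h | h
      · exact h
      · exfalso
        have hh : -(z i) = D i := by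
          funext j; simp [h, hD, neg_sub]
        rw [← hh] at hDi
        exact lexPos_not_neg_aux16 hposi hDi
    apply hno
    refine ⟨i, hnei, fun j => ?_⟩
    have hwge : (xg i j : ℤ) ≤ (w j : ℤ) := by
      have h1 : xg i j ≤ w j := by
        rw [hw j]
        calc xg i j ≤ c i * xg i j := Nat.le_mul_of_pos_left _ (Nat.pos_of_ne_zero hci)
          _ ≤ ∑ i', c i' * xg i' j :=
              Finset.single_le_sum (f := fun i' => c i' * xg i' j)
                (fun _ _ => Nat.zero_le _) (Finset.mem_univ i)
      exact_mod_cast h1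
    rw [hzD]
    simp only [hD]
    omega
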